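/- Let L be a nonempty compact totally disconnected topological space. Then the natural map C(L₁, ℤ) ⊗_ℤ C(L₂, ℤ) → C(L₁ × L₂, ℤ), sending f₁ ⊗ f₂ to the function (x₁,x₂) ↦ f₁(x₁)·f₂(x₂), is an isomorphism of abelian groups, where L₁, L₂ are compact totally disconnected spaces and C(−,ℤ) denotes locally constant (equivalently continuous) ℤ-valued functions. -/

import Mathlib

open TensorProduct

variable {L₁ L₂ : Type*} [TopologicalSpace L₁] [TopologicalSpace L₂]

section Aux

variable {L : Type*} [TopologicalSpace L] {α : Type*}

lemma fiber_isClopen (φ : L → α) (hφ : ∀ x, IsOpen {x' | φ x' = φ x}) (x : L) :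
    IsClopen {x' | φ x' = φ x} := by
  classical
  refine ⟨?_, hφ x⟩
  rw [← isOpen_compl_iff]
  rw [isOpen_iff_forall_mem_open]
  intro x' hx'
  refine ⟨{x'' | φ x'' = φ x'}, ?_, hφ x', rfl⟩
  intro z hz
  simp only [Set.mem_compl_iff, Set.mem_setOf_eq] at *
  rw [hz]; exact hx'

lemma range_fin [CompactSpace L] (φ : L → α) (hφ : ∀ x, IsOpen {x' | φ x' = φ x}) :
    (Set.range φ).Finite := by
  obtain ⟨t, ht⟩ := IsCompact.elim_finite_subcover isCompact_univ
    (fun x : L => {x' | φ x' = φ x}) hφ (fun x _ => Set.mem_iUnion.2 ⟨x, rfl⟩)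
  refine Set.Finite.subset (t.finite_toSet.image φ) ?_
  rintro _ ⟨x, rfl⟩
  obtain ⟨s, hs⟩ := Set.mem_iUnion.1 (ht (Set.mem_univ x))
  simp only [Set.mem_iUnion, exists_prop] at hs
  obtain ⟨hs1, hs2⟩ := hs
  exact ⟨s, hs1, hs2.symm⟩

open Classical in
/-- Indicator of a clopen set as a continuous map. -/
noncomputable def chi (A : Set L) (hA : IsClopen A) : C(L, ℤ) :=
  ⟨fun x => if x ∈ A then 1 else 0, by
    have : (fun x => if x ∈ A then (1:ℤ) else 0) =
        (fun b : Bool => if b then (1:ℤ) else 0) ∘ A.boolIndicator := by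
      funext x
      by_cases h : x ∈ A <;> simp [Set.boolIndicator, h]
    rw [this]
    exact (continuous_of_discreteTopology).comp
      ((continuous_boolIndicator_iff_isClopen A).2 hA)⟩

open Classical in
@[simp] lemma chi_apply (A : Set L) (hA : IsClopen A) (x : L) :
    chi A hA x = if x ∈ A then 1 else 0 := rfl

end Aux

/-- The bilinear map `C(L₁,ℤ) × C(L₂,ℤ) → C(L₁ × L₂, ℤ)` sending `(f₁, f₂)` to
`(x₁,x₂) ↦ f₁ x₁ * f₂ x₂`. -/
noncomputable def mulBilin :
    C(L₁, ℤ) →ₗ[ℤ] C(L₂, ℤ) →ₗ[ℤ] C(L₁ × L₂, ℤ) :=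
  LinearMap.mk₂ ℤ
    (fun f g => f.comp ⟨Prod.fst, continuous_fst⟩ * g.comp ⟨Prod.snd, continuous_snd⟩)
    (by intro f f' g; ext p; simp [add_mul])
    (by intro c f g; ext p; simp [mul_assoc])
    (by intro f g g'; ext p; simp [mul_add])
    (by intro c f g; ext p; simp; ring)

lemma lift_apply_pt (t : C(L₁, ℤ) ⊗[ℤ] C(L₂, ℤ)) (S : Finset (C(L₁, ℤ) × C(L₂, ℤ)))
    (hS : t = ∑ i ∈ S, i.1 ⊗ₜ[ℤ] i.2) (x : L₁) (y : L₂) :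
    TensorProduct.lift (mulBilin (L₁ := L₁) (L₂ := L₂)) t (x, y)
      = ∑ i ∈ S, i.1 x * i.2 y := by
  subst hS
  rw [map_sum]
  simp [mulBilin]

/-- for compact totally disconnected (nonempty) spaces L₁, L₂, the natural
map `C(L₁,ℤ) ⊗ C(L₂,ℤ) → C(L₁ × L₂, ℤ)`, `f₁ ⊗ f₂ ↦ ((x₁,x₂) ↦ f₁ x₁ · f₂ x₂)`, is an
isomorphism of abelian groups. -/
theorem stmt_6 [CompactSpace L₁] [CompactSpace L₂] [T2Space L₁] [T2Space L₂]
    [TotallyDisconnectedSpace L₁] [TotallyDisconnectedSpace L₂]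
    [Nonempty L₁] [Nonempty L₂] :
    Function.Bijective
      (TensorProduct.lift (mulBilin (L₁ := L₁) (L₂ := L₂))) := by
  classical
  constructor
  · rw [injective_iff_map_eq_zero]
    intro t ht
    obtain ⟨S, hS⟩ := TensorProduct.exists_finset t
    set φ : L₁ → (S → ℤ) := fun x i => (i : C(L₁, ℤ) × C(L₂, ℤ)).1 x with hφdef
    have hopen : ∀ x, IsOpen {x' | φ x' = φ x} := by
      intro x
      have hc : Continuous φ := continuous_pi fun i => (i : C(L₁, ℤ) × C(L₂, ℤ)).1.continuous
      have he : {x' | φ x' = φ x} = φ ⁻¹' {φ x} := rfl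
      rw [he]
      exact (isOpen_discrete _).preimage hc
    have hfin := range_fin φ hopen
    set V := hfin.toFinset with hV
    set c : (S → ℤ) → C(L₁, ℤ) := fun v =>
      if h : IsClopen {x' | φ x' = v} then chi _ h else 0 with hcdef
    have hclopen : ∀ v ∈ V, IsClopen {x' | φ x' = v} := by
      intro v hv
      rw [hV, Set.Finite.mem_toFinset] at hv
      obtain ⟨x₀, rfl⟩ := hv
      exact fiber_isClopen φ hopen x₀
    have hcx : ∀ v ∈ V, ∀ x, c v x = if φ x = v then 1 else 0 := by
      intro v hv x
      rw [hcdef]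
      simp only [dif_pos (hclopen v hv), chi_apply, Set.mem_setOf_eq]
    have hS' : t = ∑ i ∈ S.attach,
        ((i : C(L₁, ℤ) × C(L₂, ℤ)).1 ⊗ₜ[ℤ] (i : C(L₁, ℤ) × C(L₂, ℤ)).2) := by
      rw [hS, ← Finset.sum_attach S fun i => i.1 ⊗ₜ[ℤ] i.2]
    have hrep : ∀ i : {x // x ∈ S}, (i : C(L₁, ℤ) × C(L₂, ℤ)).1 = ∑ v ∈ V, v i • c v := by
      intro i
      ext x
      have hxV : φ x ∈ V := by rw [hV, Set.Finite.mem_toFinset]; exact ⟨x, rfl⟩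
      have : ((∑ v ∈ V, v i • c v) : C(L₁, ℤ)) x = ∑ v ∈ V, v i * c v x := by
        simp
      rw [this, Finset.sum_eq_single (φ x)]
      · rw [hcx _ hxV, if_pos rfl, mul_one]
      · intro v hv hne
        rw [hcx _ hv, if_neg (fun hh => hne hh.symm), mul_zero]
      · intro hx; exact absurd hxV hx
    have ht2 : t = ∑ v ∈ V, c v ⊗ₜ[ℤ]
        (∑ i ∈ S.attach, v i • (i : C(L₁, ℤ) × C(L₂, ℤ)).2) := by
      rw [hS', Finset.sum_congr rfl fun i _ => by rw [hrep i]]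
      simp only [TensorProduct.sum_tmul, TensorProduct.tmul_sum, TensorProduct.smul_tmul',
        TensorProduct.tmul_smul]
      rw [Finset.sum_comm]
    have hzero : ∀ v ∈ V, (∑ i ∈ S.attach, v i • (i : C(L₁, ℤ) × C(L₂, ℤ)).2) = 0 := by
      intro v hv
      rw [hV, Set.Finite.mem_toFinset] at hv
      obtain ⟨x₀, rfl⟩ := hv
      ext y
      have h0 : (TensorProduct.lift (mulBilin (L₁ := L₁) (L₂ := L₂)) t) (x₀, y) = 0 := by
        rw [ht]; rfl
      rw [lift_apply_pt t S hS x₀ y] at h0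
      have h1 : ∑ i ∈ S.attach,
          (i : C(L₁, ℤ) × C(L₂, ℤ)).1 x₀ * (i : C(L₁, ℤ) × C(L₂, ℤ)).2 y = 0 := by
        rw [Finset.sum_attach S fun i => i.1 x₀ * i.2 y]; exact h0
      simpa [hφdef] using h1
    rw [ht2]
    exact Finset.sum_eq_zero fun v hv => by rw [hzero v hv, TensorProduct.tmul_zero]
  · intro h
    set φ : L₁ → (L₂ → ℤ) := fun x y => h (x, y) with hφdef
    have hopen : ∀ x, IsOpen {x' | φ x' = φ x} := by
      intro x
      rw [isOpen_iff_forall_mem_open]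
      intro x' hx'
      have hU : ∀ y : L₂, ∃ u v, IsOpen u ∧ IsOpen v ∧ x' ∈ u ∧ y ∈ v ∧
          u ×ˢ v ⊆ h ⁻¹' {h (x', y)} := by
        intro y
        exact (isOpen_prod_iff).1
          ((isOpen_discrete {h (x', y)}).preimage h.continuous) x' y rfl
      choose u v hu hv hxu hyv hsub using hU
      obtain ⟨s, hscov⟩ := IsCompact.elim_finite_subcover (isCompact_univ (X := L₂)) v hv
        (fun y _ => Set.mem_iUnion.2 ⟨y, hyv y⟩)
      refine ⟨⋂ y ∈ s, u y, ?_, isOpen_biInter_finset fun y _ => hu y,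
        Set.mem_iInter₂.2 fun y _ => hxu y⟩
      intro z hz
      have hzx' : φ z = φ x' := by
        funext y
        obtain ⟨y₀, hy₀⟩ := Set.mem_iUnion.1 (hscov (Set.mem_univ y))
        simp only [Set.mem_iUnion, exists_prop] at hy₀
        obtain ⟨hy₀s, hyv₀⟩ := hy₀
        have h1 := hsub y₀ (Set.mk_mem_prod (Set.mem_iInter₂.1 hz y₀ hy₀s) hyv₀)
        have h2 := hsub y₀ (Set.mk_mem_prod (hxu y₀) hyv₀)
        simp only [Set.mem_preimage, Set.mem_singleton_iff] at h1 h2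
        show h (z, y) = h (x', y)
        rw [h1, h2]
      show φ z = φ x
      rw [hzx']; exact hx'
    have hfin := range_fin φ hopen
    set V := hfin.toFinset with hV
    set g : (L₂ → ℤ) → C(L₂, ℤ) := fun v => if hc : Continuous v then ⟨v, hc⟩ else 0
      with hgdef
    set c : (L₂ → ℤ) → C(L₁, ℤ) := fun v =>
      if hcl : IsClopen {x' | φ x' = v} then chi _ hcl else 0 with hcdef
    have hclopen : ∀ v ∈ V, IsClopen {x' | φ x' = v} := by
      intro v hv
      rw [hV, Set.Finite.mem_toFinset] at hv
      obtain ⟨x₀, rfl⟩ := hv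
      exact fiber_isClopen φ hopen x₀
    have hcx : ∀ v ∈ V, ∀ x, c v x = if φ x = v then 1 else 0 := by
      intro v hv x
      rw [hcdef]
      simp only [dif_pos (hclopen v hv), chi_apply, Set.mem_setOf_eq]
    refine ⟨∑ v ∈ V, c v ⊗ₜ[ℤ] g v, ?_⟩
    ext ⟨x, y⟩
    have hxV : φ x ∈ V := by rw [hV, Set.Finite.mem_toFinset]; exact ⟨x, rfl⟩
    have hφxc : Continuous (φ x) := h.continuous.comp (Continuous.prodMk_right x)
    rw [map_sum]
    have heval : ((∑ v ∈ V, TensorProduct.lift (mulBilin (L₁ := L₁) (L₂ := L₂))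
        (c v ⊗ₜ[ℤ] g v)) : C(L₁ × L₂, ℤ)) (x, y) = ∑ v ∈ V, c v x * g v y := by
      simp [mulBilin]
    rw [heval, Finset.sum_eq_single (φ x)]
    · rw [hcx _ hxV, if_pos rfl, one_mul, hgdef]
      simp only [dif_pos hφxc]
      rfl
    · intro v hv hne
      rw [hcx _ hv, if_neg (fun hh => hne hh.symm), zero_mul]
    · intro hx; exact absurd hxV hx
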